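/- A cubic polynomial P(λ) = λ^3 + Aλ^2 + Bλ + D with real coefficients has all its (complex) roots strictly inside the unit circle if and only if |D| < 1, P(1) > 0, P(-1) < 0, and -D^2 + AD - B + 1 > 0. -/

import Mathlib

private lemma real_back (a b c : ℝ) (h1 : 0 < (1-a)*(1-b)*(1-c)) (h2 : 0 < (1+a)*(1+b)*(1+c))
    (h3 : 0 < (1-a*b)*(1-a*c)*(1-b*c)) (h4 : |a*b*c| < 1) : |a| < 1 := by
  rw [abs_lt] at h4 ⊢
  obtain ⟨h4l, h4r⟩ := h4
  constructor
  · -- -1 < a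
    by_contra h; push_neg at h  -- a ≤ -1
    have hbc : (1+b)*(1+c) < 0 := by nlinarith
    rcases mul_neg_iff.mp hbc with ⟨hb, hc⟩ | ⟨hb, hc⟩
    · -- 1+b>0, 1+c<0 : c ≤ -1... c < -1
      have hac : 1 < a*c := by nlinarith
      have h' : (1-a*b)*(1-b*c) < 0 := by nlinarith
      rcases mul_neg_iff.mp h' with ⟨hx, hy⟩ | ⟨hx, hy⟩
      · -- 1-ab>0, 1-bc<0 : bc>1, c<-1 so b<0, then abc = (bc)*a ≤ -(bc) < -1
        (clear h1 h2 h3 hbc h'; nlinarith [mul_nonneg (by nlinarith : (0:ℝ) ≤ -(a+1)) (by nlinarith : (0:ℝ) ≤ b*c - 1)])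
      · -- ab>1, a<0 so b<0, abc = (ab)*c < c < -1
        (clear h1 h2 h3 hbc h'; nlinarith [mul_nonneg (by nlinarith : (0:ℝ) ≤ -(c+1)) (by nlinarith : (0:ℝ) ≤ a*b - 1)])
    · -- 1+b<0, 1+c>0 : b < -1
      have hab : 1 < a*b := by nlinarith
      have h' : (1-a*c)*(1-b*c) < 0 := by nlinarith
      rcases mul_neg_iff.mp h' with ⟨hx, hy⟩ | ⟨hx, hy⟩
      · -- bc > 1, b<-1 so c<0, abc = (bc)*a ≤ -(bc) < -1
        (clear h1 h2 h3 hbc h'; nlinarith [mul_nonneg (by nlinarith : (0:ℝ) ≤ -(a+1)) (by nlinarith : (0:ℝ) ≤ b*c - 1)])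
      · -- ac > 1, a≤-1 so c<0, abc = (ac)*b < b < -1
        (clear h1 h2 h3 hbc h'; nlinarith [mul_nonneg (by nlinarith : (0:ℝ) ≤ -(b+1)) (by nlinarith : (0:ℝ) ≤ a*c - 1)])
  · -- a < 1
    by_contra h; push_neg at h  -- 1 ≤ a
    have hbc : (1-b)*(1-c) < 0 := by nlinarith
    rcases mul_neg_iff.mp hbc with ⟨hb, hc⟩ | ⟨hb, hc⟩
    · -- 1-b>0, 1-c<0 : c > 1
      have hac : 1 < a*c := by nlinarith
      have h' : (1-a*b)*(1-b*c) < 0 := by nlinarith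
      rcases mul_neg_iff.mp h' with ⟨hx, hy⟩ | ⟨hx, hy⟩
      · -- bc>1, c>1 so b>0, abc = a*(bc) ≥ bc > 1
        (clear h1 h2 h3 hbc h'; nlinarith [mul_nonneg (by nlinarith : (0:ℝ) ≤ a - 1) (by nlinarith : (0:ℝ) ≤ b*c - 1)])
      · -- ab>1, a≥1>0 so b>0, abc = (ab)*c > c > 1
        (clear h1 h2 h3 hbc h'; nlinarith [mul_nonneg (by nlinarith : (0:ℝ) ≤ c - 1) (by nlinarith : (0:ℝ) ≤ a*b - 1)])
    · -- b > 1
      have hab : 1 < a*b := by nlinarith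
      have h' : (1-a*c)*(1-b*c) < 0 := by nlinarith
      rcases mul_neg_iff.mp h' with ⟨hx, hy⟩ | ⟨hx, hy⟩
      · (clear h1 h2 h3 hbc h'; nlinarith [mul_nonneg (by nlinarith : (0:ℝ) ≤ a - 1) (by nlinarith : (0:ℝ) ≤ b*c - 1)])
      · (clear h1 h2 h3 hbc h'; nlinarith [mul_nonneg (by nlinarith : (0:ℝ) ≤ b - 1) (by nlinarith : (0:ℝ) ≤ a*c - 1)])

private lemma real_fwd (a b c : ℝ) (ha : |a| < 1) (hb : |b| < 1) (hc : |c| < 1) :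
    0 < (1-a)*(1-b)*(1-c) ∧ 0 < (1+a)*(1+b)*(1+c) ∧
      0 < (1-a*b)*(1-a*c)*(1-b*c) ∧ |a*b*c| < 1 := by
  obtain ⟨ha1, ha2⟩ := abs_lt.mp ha
  obtain ⟨hb1, hb2⟩ := abs_lt.mp hb
  obtain ⟨hc1, hc2⟩ := abs_lt.mp hc
  refine ⟨mul_pos (mul_pos (by linarith) (by linarith)) (by linarith),
    mul_pos (mul_pos (by linarith) (by linarith)) (by linarith), ?_, ?_⟩
  · have hab : 0 < 1 - a*b := by nlinarith
    have hac : 0 < 1 - a*c := by nlinarith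
    have hbc : 0 < 1 - b*c := by nlinarith
    positivity
  · rw [abs_mul, abs_mul]
    nlinarith [abs_nonneg a, abs_nonneg b, abs_nonneg c,
      mul_nonneg (abs_nonneg a) (abs_nonneg b), mul_nonneg (abs_nonneg b) (abs_nonneg c)]

private lemma pair_fwd (w x y : ℝ) (hy : y ≠ 0) (hw : |w| < 1) (hz : x^2+y^2 < 1) :
    0 < (1-w)*((1-x)^2+y^2) ∧ 0 < (1+w)*((1+x)^2+y^2) ∧
      0 < ((1-w*x)^2+(w*y)^2)*(1-(x^2+y^2)) ∧ |w*(x^2+y^2)| < 1 := by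
  obtain ⟨hw1, hw2⟩ := abs_lt.mp hw
  have hy2 : 0 < y^2 := by positivity
  have h1w : 0 < 1 - w := by linarith
  have h2w : 0 < 1 + w := by linarith
  refine ⟨by positivity, by positivity, ?_, ?_⟩
  · have hq : 0 < (1-w*x)^2+(w*y)^2 := by
      rcases eq_or_ne w 0 with h | h
      · simp [h]
      · have : (w*y)^2 > 0 := by positivity
        nlinarith [sq_nonneg (1-w*x)]
    have : 0 < 1 - (x^2+y^2) := by linarith
    positivity
  · rw [abs_mul, abs_of_nonneg (by positivity : (0:ℝ) ≤ x^2+y^2)]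
    nlinarith [abs_nonneg w,
      mul_nonneg (by linarith : (0:ℝ) ≤ 1 - |w|) (by positivity : (0:ℝ) ≤ x^2+y^2)]

private lemma pair_back (w x y : ℝ) (hy : y ≠ 0)
    (h1 : 0 < (1-w)*((1-x)^2+y^2)) (h2 : 0 < (1+w)*((1+x)^2+y^2))
    (h3 : 0 < ((1-w*x)^2+(w*y)^2)*(1-(x^2+y^2))) (h4 : |w*(x^2+y^2)| < 1) :
    |w| < 1 ∧ x^2+y^2 < 1 := by
  have hy2 : 0 < y^2 := by positivity
  have q1 : 0 < (1-x)^2+y^2 := by positivity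
  have q2 : 0 < (1+x)^2+y^2 := by positivity
  have hw1 : 0 < 1 - w := by nlinarith
  have hw2 : 0 < 1 + w := by nlinarith
  have hq : 0 < (1-w*x)^2+(w*y)^2 := by
    rcases eq_or_ne w 0 with h | h
    · simp [h]
    · have : (w*y)^2 > 0 := by positivity
      nlinarith [sq_nonneg (1-w*x)]
  refine ⟨abs_lt.mpr ⟨by linarith, by linarith⟩, by nlinarith⟩

private lemma real_case (a b c A B D : ℝ) (hA : A = -(a+b+c)) (hB : B = a*b+a*c+b*c)
    (hD : D = -(a*b*c)) :
    (|a| < 1 ∧ |b| < 1 ∧ |c| < 1) ↔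
      (|D| < 1 ∧ 0 < 1 + A + B + D ∧ (-1 : ℝ) + A - B + D < 0 ∧
        0 < -D ^ 2 + A * D - B + 1) := by
  have e1 : 1 + A + B + D = (1-a)*(1-b)*(1-c) := by rw [hA, hB, hD]; ring
  have e2 : -((-1) + A - B + D) = (1+a)*(1+b)*(1+c) := by rw [hA, hB, hD]; ring
  have e3 : -D^2 + A*D - B + 1 = (1-a*b)*(1-a*c)*(1-b*c) := by rw [hA, hB, hD]; ring
  have e4 : |D| = |a*b*c| := by rw [hD, abs_neg]
  constructor
  · rintro ⟨ha, hb, hc⟩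
    obtain ⟨p1, p2, p3, p4⟩ := real_fwd a b c ha hb hc
    exact ⟨by rw [e4]; exact p4, by rw [e1]; exact p1, by linarith, by rw [e3]; exact p3⟩
  · rintro ⟨q4, q1, q2, q3⟩
    rw [e4] at q4; rw [e1] at q1; rw [e3] at q3
    have q2' : 0 < (1+a)*(1+b)*(1+c) := by rw [← e2]; linarith
    exact ⟨real_back a b c q1 q2' q3 q4,
      real_back b a c (lt_of_lt_of_eq q1 (by ring)) (lt_of_lt_of_eq q2' (by ring))
        (lt_of_lt_of_eq q3 (by ring)) (by rw [show b*a*c = a*b*c from by ring]; exact q4),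
      real_back c a b (lt_of_lt_of_eq q1 (by ring)) (lt_of_lt_of_eq q2' (by ring))
        (lt_of_lt_of_eq q3 (by ring)) (by rw [show c*a*b = a*b*c from by ring]; exact q4)⟩

private lemma pair_case (w x y A B D : ℝ) (hy : y ≠ 0) (hA : A = -(w+2*x))
    (hB : B = 2*x*w + (x^2+y^2)) (hD : D = -(w*(x^2+y^2))) :
    (|w| < 1 ∧ x^2+y^2 < 1) ↔
      (|D| < 1 ∧ 0 < 1 + A + B + D ∧ (-1 : ℝ) + A - B + D < 0 ∧
        0 < -D ^ 2 + A * D - B + 1) := by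
  have e1 : 1 + A + B + D = (1-w)*((1-x)^2+y^2) := by rw [hA, hB, hD]; ring
  have e2 : -((-1) + A - B + D) = (1+w)*((1+x)^2+y^2) := by rw [hA, hB, hD]; ring
  have e3 : -D^2 + A*D - B + 1 = ((1-w*x)^2+(w*y)^2)*(1-(x^2+y^2)) := by rw [hA, hB, hD]; ring
  have e4 : |D| = |w*(x^2+y^2)| := by rw [hD, abs_neg]
  constructor
  · rintro ⟨hw, hz⟩
    obtain ⟨p1, p2, p3, p4⟩ := pair_fwd w x y hy hw hz
    exact ⟨by rw [e4]; exact p4, by rw [e1]; exact p1, by linarith, by rw [e3]; exact p3⟩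
  · rintro ⟨q4, q1, q2, q3⟩
    rw [e4] at q4; rw [e1] at q1; rw [e3] at q3
    exact pair_back w x y hy q1 (by linarith) q3 q4

open Polynomial in
private lemma cubic_has_root (A B D : ℝ) :
    ∃ r : ℂ, r^3 + (A:ℂ)*r^2 + (B:ℂ)*r + (D:ℂ) = 0 := by
  set p : Polynomial ℂ := X^3 + C (A:ℂ) * X^2 + C (B:ℂ) * X + C (D:ℂ) with hp
  have hdeg : p.degree = 3 := by
    rw [hp]; compute_degree!
  obtain ⟨r, hr⟩ := Complex.exists_root (f := p) (by rw [hdeg]; norm_num)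
  refine ⟨r, ?_⟩
  have := hr
  simp only [IsRoot, hp, eval_add, eval_mul, eval_pow, eval_X, eval_C] at this
  exact this

private lemma cubic_factor (A B D : ℝ) :
    ∃ r s t : ℂ, ∀ z : ℂ, z^3 + (A:ℂ)*z^2 + (B:ℂ)*z + (D:ℂ) = (z-r)*(z-s)*(z-t) := by
  obtain ⟨r, hr⟩ := cubic_has_root A B D
  set b1 : ℂ := (A:ℂ) + r with hb1
  set c1 : ℂ := (B:ℂ) + (A:ℂ)*r + r^2 with hc1
  obtain ⟨e, he⟩ := IsAlgClosed.exists_pow_nat_eq (k := ℂ) (b1^2 - 4*c1) (n := 2) (by norm_num)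
  refine ⟨r, (-b1+e)/2, (-b1-e)/2, fun z => ?_⟩
  linear_combination hr + ((z-r)/4) * he

private lemma abs_lt_one_iff_sq (u : ℂ) : ‖u‖ < 1 ↔ u.re^2 + u.im^2 < 1 := by
  have h1 : (‖u‖)^2 = u.re^2 + u.im^2 := by
    rw [Complex.sq_norm, Complex.normSq_apply]; ring
  have h2 := norm_nonneg u
  constructor <;> intro h <;> nlinarith

private lemma real_glue (A B D : ℝ) (u v k : ℂ)
    (hui : u.im = 0) (hvi : v.im = 0) (hki : k.im = 0)
    (hA : (A:ℂ) = -(u+v+k)) (hB : (B:ℂ) = u*v+u*k+v*k) (hD : (D:ℂ) = -(u*v*k)) :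
    (‖u‖ < 1 ∧ ‖v‖ < 1 ∧ ‖k‖ < 1) ↔
      (|D| < 1 ∧ 0 < 1 + A + B + D ∧ (-1 : ℝ) + A - B + D < 0 ∧
        0 < -D ^ 2 + A * D - B + 1) := by
  have hu : u = (u.re : ℂ) := Complex.ext rfl (by simp [hui])
  have hv : v = (v.re : ℂ) := Complex.ext rfl (by simp [hvi])
  have hk : k = (k.re : ℂ) := Complex.ext rfl (by simp [hki])
  have hA' : A = -(u.re + v.re + k.re) := by
    have h := congrArg Complex.re hA
    simpa [hui, hvi, hki] using h
  have hB' : B = u.re*v.re + u.re*k.re + v.re*k.re := by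
    have h := congrArg Complex.re hB
    simp [Complex.mul_re, hui, hvi, hki] at h
    linear_combination h
  have hD' : D = -(u.re*v.re*k.re) := by
    have h := congrArg Complex.re hD
    simp [Complex.mul_re, Complex.mul_im, hui, hvi, hki] at h
    linear_combination h
  rw [hu, hv, hk, Complex.norm_real, Complex.norm_real, Complex.norm_real, Real.norm_eq_abs, Real.norm_eq_abs, Real.norm_eq_abs]
  exact real_case u.re v.re k.re A B D hA' hB' hD'

private lemma pair_glue (A B D : ℝ) (u v k : ℂ)
    (hvr : v.re = u.re) (hvi : v.im = -u.im) (hki : k.im = 0) (hui : u.im ≠ 0)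
    (hA : (A:ℂ) = -(u+v+k)) (hB : (B:ℂ) = u*v+u*k+v*k) (hD : (D:ℂ) = -(u*v*k)) :
    (‖u‖ < 1 ∧ ‖v‖ < 1 ∧ ‖k‖ < 1) ↔
      (|D| < 1 ∧ 0 < 1 + A + B + D ∧ (-1 : ℝ) + A - B + D < 0 ∧
        0 < -D ^ 2 + A * D - B + 1) := by
  have hk : k = (k.re : ℂ) := Complex.ext rfl (by simp [hki])
  have hA' : A = -(k.re + 2*u.re) := by
    have h := congrArg Complex.re hA
    simp [hvr, hki] at h
    linarith
  have hB' : B = 2*u.re*k.re + (u.re^2+u.im^2) := by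
    have h := congrArg Complex.re hB
    simp [Complex.mul_re, hvr, hvi, hki] at h
    linear_combination h
  have hD' : D = -(k.re*(u.re^2+u.im^2)) := by
    have h := congrArg Complex.re hD
    simp [Complex.mul_re, Complex.mul_im, hvr, hvi, hki] at h
    linear_combination h
  rw [abs_lt_one_iff_sq u, abs_lt_one_iff_sq v, hk, Complex.norm_real, Real.norm_eq_abs, hvr, hvi]
  rw [show (-u.im)^2 = u.im^2 from by ring]
  rw [show (u.re^2 + u.im^2 < 1 ∧ u.re^2 + u.im^2 < 1 ∧ |k.re| < 1) ↔
      (|k.re| < 1 ∧ u.re^2 + u.im^2 < 1) from by tauto]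
  exact pair_case k.re u.re u.im A B D hui hA' hB' hD'

/-- Stability criterion for a real cubic `λ³ + Aλ² + Bλ + D`: all complex roots lie
strictly inside the unit circle iff `|D| < 1`, `P(1) > 0`, `P(-1) < 0` and
`-D² + AD - B + 1 > 0`. -/
theorem cubic_stability_criterion (A B D : ℝ) :
    (∀ z : ℂ, z ^ 3 + (A : ℂ) * z ^ 2 + (B : ℂ) * z + (D : ℂ) = 0 → ‖z‖ < 1) ↔
      (|D| < 1 ∧ 0 < 1 + A + B + D ∧ (-1 : ℝ) + A - B + D < 0 ∧
        0 < -D ^ 2 + A * D - B + 1) := by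
  obtain ⟨r, s, t, hfac⟩ := cubic_factor A B D
  have hA : (A:ℂ) = -(r+s+t) := by
    linear_combination ((1:ℂ)/2) * hfac 1 + ((1:ℂ)/2) * hfac (-1) - hfac 0
  have hB : (B:ℂ) = r*s+r*t+s*t := by
    linear_combination ((1:ℂ)/2) * hfac 1 - ((1:ℂ)/2) * hfac (-1)
  have hD : (D:ℂ) = -(r*s*t) := by linear_combination hfac 0
  have hroots : (∀ z : ℂ, z ^ 3 + (A : ℂ) * z ^ 2 + (B : ℂ) * z + (D : ℂ) = 0 →
      ‖z‖ < 1) ↔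
      (‖r‖ < 1 ∧ ‖s‖ < 1 ∧ ‖t‖ < 1) := by
    constructor
    · intro h
      exact ⟨h r (by rw [hfac]; ring), h s (by rw [hfac]; ring), h t (by rw [hfac]; ring)⟩
    · rintro ⟨h1, h2, h3⟩ z hz
      rw [hfac] at hz
      rcases mul_eq_zero.mp hz with hz' | hz'
      · rcases mul_eq_zero.mp hz' with hz'' | hz''
        · rwa [sub_eq_zero.mp hz'']
        · rwa [sub_eq_zero.mp hz'']
      · rwa [sub_eq_zero.mp hz']
  rw [hroots]
  by_cases hrim : r.im = 0
  · have hst : s + t = -(A:ℂ) - r := by linear_combination hA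
    have hpt : s * t = (B:ℂ) + (A:ℂ)*r + r^2 := by linear_combination -hB - r * hst
    have hsum : s.im + t.im = 0 := by
      have h := congrArg Complex.im hst
      simpa [hrim] using h
    have hprod : s.re * t.im + s.im * t.re = 0 := by
      have h := congrArg Complex.im hpt
      simpa [Complex.mul_im, hrim, pow_two] using h
    by_cases hsim : s.im = 0
    · have htim : t.im = 0 := by linarith
      exact real_glue A B D r s t hrim hsim htim hA hB hD
    · have htim : t.im = -s.im := by linarith
      have htre : t.re = s.re := by
        have : s.im * (t.re - s.re) = 0 := by
          rw [htim] at hprod; linear_combination hprod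
        rcases mul_eq_zero.mp this with h | h
        · exact absurd h hsim
        · linarith [sub_eq_zero.mp h]
      refine Iff.trans (by tauto) (pair_glue A B D s t r htre htim hrim hsim ?_ ?_ ?_)
      · rw [hA]; ring
      · rw [hB]; ring
      · rw [hD]; ring
  · -- conj r is a root
    have hr0 : r ^ 3 + (A:ℂ) * r ^ 2 + (B:ℂ) * r + (D:ℂ) = 0 := by rw [hfac]; ring
    have hc0 : (starRingEnd ℂ r) ^ 3 + (A:ℂ) * (starRingEnd ℂ r) ^ 2 +
        (B:ℂ) * (starRingEnd ℂ r) + (D:ℂ) = 0 := by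
      have h := congrArg (starRingEnd ℂ) hr0
      simpa [map_add, map_mul, map_pow, Complex.conj_ofReal] using h
    rw [hfac] at hc0
    have hne : starRingEnd ℂ r - r ≠ 0 := by
      rw [sub_ne_zero]
      intro h
      exact hrim (Complex.conj_eq_iff_im.mp h)
    have hcs : starRingEnd ℂ r - s = 0 ∨ starRingEnd ℂ r - t = 0 := by
      rcases mul_eq_zero.mp hc0 with h | h
      · rcases mul_eq_zero.mp h with h' | h'
        · exact absurd h' hne
        · exact Or.inl h'
      · exact Or.inr h
    have hnsq : Complex.normSq r ≠ 0 := by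
      intro h
      exact hrim (by simpa using congrArg Complex.im (Complex.normSq_eq_zero.mp h))
    rcases hcs with h | h
    · have hs : s = starRingEnd ℂ r := (sub_eq_zero.mp h).symm
      have htim : t.im = 0 := by
        have hD' : (D:ℂ) = -((Complex.normSq r : ℂ) * t) := by
          rw [hD, hs, Complex.mul_conj]
        have h2 := congrArg Complex.im hD'
        simp [Complex.mul_im] at h2
        exact h2.resolve_left (fun h0 => hrim (by simp [h0]))
      exact pair_glue A B D r s t (by rw [hs]; simp) (by rw [hs]; simp) htim hrim hA hB hD
    · have ht : t = starRingEnd ℂ r := (sub_eq_zero.mp h).symm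
      have hsim : s.im = 0 := by
        have hD' : (D:ℂ) = -((Complex.normSq r : ℂ) * s) := by
          rw [hD, ht, show r*s*starRingEnd ℂ r = r * starRingEnd ℂ r * s from by ring,
            Complex.mul_conj]
        have h2 := congrArg Complex.im hD'
        simp [Complex.mul_im] at h2
        exact h2.resolve_left (fun h0 => hrim (by simp [h0]))
      refine Iff.trans (by tauto) (pair_glue A B D r t s (by rw [ht]; simp) (by rw [ht]; simp)
        hsim hrim ?_ ?_ ?_)
      · rw [hA]; ring
      · rw [hB]; ring
      · rw [hD]; ring
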